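/- Let m ≥ 1 be an integer, let α be real with m − 1 < α < m, let l ≥ 2 be an integer, and let j be an integer with 1 ≤ j < l. Define U^{m−1}_α(n) = Γ(α)·Γ(n+α−m)/(Γ(α−m+1)·Γ(n)) for integers n ≥ 1. Then the series defining the coefficient S^{m−1}_{j+1} converges absolutely and admits the closed form S^{m−1}_{j+1} = ∑_{k=0}^∞ (U^{m−1}_α(lk+j) − U^{m−1}_α(lk+j+1)) = (m−α)·(Γ(α)/Γ(α−m+1))·∑_{k=0}^∞ Γ(lk+j+α−m)/Γ(lk+j+1), with the last series also absolutely convergent. -/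
import Mathlib


/-- Closed form for the coefficients `S^{m−1}_{j+1}` of fractional difference
maps: the defining series converges absolutely and
`S^{m−1}_{j+1} = (m−α)·(Γ(α)/Γ(α−m+1))·∑ₖ Γ(lk+j+α−m)/Γ(lk+j+1)`, the last
series being absolutely convergent as well. -/
theorem stmt_15 (m : ℕ) (hm : 1 ≤ m) (α : ℝ) (hα1 : (m : ℝ) - 1 < α) (hα2 : α < m)
    (l : ℕ) (hl : 2 ≤ l) (j : ℕ) (hj1 : 1 ≤ j) (hjl : j < l)
    (Um1 : ℕ → ℝ)
    (hUm1 : ∀ n : ℕ, 1 ≤ n → Um1 n =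
      Real.Gamma α * Real.Gamma ((n : ℝ) + α - m) /
        (Real.Gamma (α - m + 1) * Real.Gamma (n : ℝ))) :
    Summable (fun k : ℕ => |Um1 (l * k + j) - Um1 (l * k + j + 1)|) ∧
    (∑' k : ℕ, (Um1 (l * k + j) - Um1 (l * k + j + 1)) =
      ((m : ℝ) - α) * (Real.Gamma α / Real.Gamma (α - m + 1)) *
        ∑' k : ℕ, Real.Gamma (((l * k + j : ℕ) : ℝ) + α - m) /
          Real.Gamma (((l * k + j + 1 : ℕ) : ℝ))) ∧
    Summable (fun k : ℕ =>
      |Real.Gamma (((l * k + j : ℕ) : ℝ) + α - m) /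
        Real.Gamma (((l * k + j + 1 : ℕ) : ℝ))|) := by
  set C : ℝ := Real.Gamma α / Real.Gamma (α - m + 1) with hC
  set V : ℕ → ℝ := fun n => Real.Gamma ((n : ℝ) + α - m) / Real.Gamma (n : ℝ) with hV
  -- positivity of the shifted argument
  have hx : ∀ n : ℕ, 1 ≤ n → 0 < (n : ℝ) + α - m := by
    intro n hn
    have : (1 : ℝ) ≤ (n : ℝ) := by exact_mod_cast hn
    linarith
  have hΓx : ∀ n : ℕ, 1 ≤ n → 0 < Real.Gamma ((n : ℝ) + α - m) :=
    fun n hn => Real.Gamma_pos_of_pos (hx n hn)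
  have hΓn : ∀ n : ℕ, 1 ≤ n → 0 < Real.Gamma (n : ℝ) := by
    intro n hn
    exact Real.Gamma_pos_of_pos (by exact_mod_cast hn)
  have hVpos : ∀ n : ℕ, 1 ≤ n → 0 ≤ V n := by
    intro n hn
    exact le_of_lt (div_pos (hΓx n hn) (hΓn n hn))
  -- key telescoping identity
  have hdiff : ∀ n : ℕ, 1 ≤ n → V n - V (n + 1) =
      ((m : ℝ) - α) * (Real.Gamma ((n : ℝ) + α - m) / Real.Gamma ((n : ℝ) + 1)) := by
    intro n hn
    have hn0 : ((n : ℝ)) ≠ 0 := by positivity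
    have hx0 : ((n : ℝ) + α - m) ≠ 0 := (hx n hn).ne'
    have h1 : Real.Gamma ((n : ℝ) + 1 + α - m) = ((n : ℝ) + α - m) * Real.Gamma ((n : ℝ) + α - m) := by
      have : (n : ℝ) + 1 + α - m = ((n : ℝ) + α - m) + 1 := by ring
      rw [this, Real.Gamma_add_one hx0]
    have h2 : Real.Gamma ((n : ℝ) + 1) = (n : ℝ) * Real.Gamma (n : ℝ) := Real.Gamma_add_one hn0
    have hΓn0 : Real.Gamma ((n : ℝ)) ≠ 0 := (hΓn n hn).ne'
    simp only [hV]
    push_cast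
    rw [h1, h2]
    field_simp
    ring
  have hFnonneg : ∀ n : ℕ, 1 ≤ n → 0 ≤ V n - V (n + 1) := by
    intro n hn
    rw [hdiff n hn]
    have h1 : 0 < Real.Gamma ((n : ℝ) + 1) := Real.Gamma_pos_of_pos (by positivity)
    have := hΓx n hn
    have : (0:ℝ) < (m : ℝ) - α := by linarith
    positivity
  -- the shifted telescoping sequence is summable
  set F : ℕ → ℝ := fun n => V (n + 1) - V (n + 2) with hF
  have hFsum : Summable F := by
    apply summable_of_sum_range_le (c := V 1) (fun n => hFnonneg (n + 1) (by omega))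
    intro n
    have : ∑ i ∈ Finset.range n, F i = V 1 - V (n + 1) := by
      have := Finset.sum_range_sub' (fun i => V (i + 1)) n
      simpa [hF] using this
    rw [this]
    have := hVpos (n + 1) (by omega)
    linarith
  -- the subseries
  set a : ℕ → ℝ := fun k => Real.Gamma (((l * k + j : ℕ) : ℝ) + α - m) /
      Real.Gamma (((l * k + j + 1 : ℕ) : ℝ)) with ha
  have hidx : ∀ k : ℕ, l * k + (j - 1) + 1 = l * k + j := by intro k; omega
  have haF : ∀ k : ℕ, a k = (((m : ℝ) - α))⁻¹ * F (l * k + (j - 1)) := by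
    intro k
    have h1 : 1 ≤ l * k + j := by omega
    have : F (l * k + (j - 1)) = V (l * k + j) - V (l * k + j + 1) := by
      have e2 : l * k + (j - 1) + 2 = l * k + j + 1 := by omega
      simp only [hF, hidx k, e2]
    rw [this, hdiff _ h1]
    have hma : ((m : ℝ) - α) ≠ 0 := by linarith
    have hcast : (((l * k + j + 1 : ℕ) : ℝ)) = ((l * k + j : ℕ) : ℝ) + 1 := by push_cast; ring
    simp only [ha, hcast]
    field_simp
  have hsub : Summable (fun k => F (l * k + (j - 1))) := by
    apply hFsum.comp_injective
    intro x y h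
    simp only at h
    have : l * x = l * y := by omega
    exact Nat.eq_of_mul_eq_mul_left (by omega) this
  have hasum : Summable a := by
    rw [funext haF]
    exact hsub.mul_left _
  -- termwise identity for Um1 differences
  have hkey : ∀ k : ℕ, Um1 (l * k + j) - Um1 (l * k + j + 1) = ((m : ℝ) - α) * C * a k := by
    intro k
    have h1 : 1 ≤ l * k + j := by omega
    have h2 : 1 ≤ l * k + j + 1 := by omega
    have hU1 : ∀ n : ℕ, 1 ≤ n → Um1 n = C * V n := by
      intro n hn
      rw [hUm1 n hn, hC, hV]
      rw [div_mul_div_comm]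
    rw [hU1 _ h1, hU1 _ h2, ← mul_sub]
    have : V (l * k + j) - V (l * k + j + 1) = ((m : ℝ) - α) * a k := by
      rw [hdiff _ h1]
      have hcast : (((l * k + j + 1 : ℕ) : ℝ)) = ((l * k + j : ℕ) : ℝ) + 1 := by push_cast; ring
      simp only [ha, hcast]
    rw [this]
    ring
  have habs : Summable (fun k : ℕ => |a k|) := hasum.abs
  refine ⟨?_, ?_, habs⟩
  · have : Summable (fun k : ℕ => Um1 (l * k + j) - Um1 (l * k + j + 1)) := by
      rw [funext hkey]
      exact hasum.mul_left _
    exact this.abs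
  · rw [tsum_congr hkey, tsum_mul_left]
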